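/- Let α be an irrational real number and let T_α be the graphing on the unit interval [0, 1) with the Borel σ-algebra and Lebesgue measure λ, generated by the translation t_α : x ↦ x + α (mod 1). Then every Borel matching of T_α misses a set of vertices of positive Lebesgue measure; consequently, the measurable chromatic index of T_α is strictly greater than 2. -/

import Mathlib

open MeasureTheory Set
open scoped ENNReal

namespace CLP

universe u

variable {V : Type u}

/-- The set of neighbours of `x` in the (symmetric) edge set `E ⊆ V × V`. -/
def nbrs (E : Set (V × V)) (x : V) : Set V := {y | (x, y) ∈ E}

/-- The number of edges from `x` into the set `Y`. -/
noncomputable def degIn (E : Set (V × V)) (Y : Set V) (x : V) : ℕ := (nbrs E x ∩ Y).ncard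

/-- The edge set is symmetric. -/
def IsSymm (E : Set (V × V)) : Prop := ∀ x y : V, (x, y) ∈ E → (y, x) ∈ E

/-- The edge set is irreflexive (no loops). -/
def Irrefl (E : Set (V × V)) : Prop := ∀ x : V, (x, x) ∉ E

/-- Every vertex has finitely many neighbours, at most `d` of them. -/
def MaxDegLE (E : Set (V × V)) (d : ℕ) : Prop :=
  ∀ x : V, (nbrs E x).Finite ∧ (nbrs E x).ncard ≤ d

/-- A matching: a symmetric set of pairwise disjoint edges. -/
def IsMatching (M : Set (V × V)) : Prop :=
  IsSymm M ∧ ∀ x y z : V, (x, y) ∈ M → (x, z) ∈ M → y = z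

/-- The set of vertices covered by at least one edge of `M`. -/
def coveredVerts (M : Set (V × V)) : Set V := {x | ∃ y, (x, y) ∈ M}

/-- `WalkLen E n x y`: there is a walk of length exactly `n` from `x` to `y` in `E`. -/
def WalkLen (E : Set (V × V)) : ℕ → V → V → Prop
  | 0, x, y => x = y
  | n + 1, x, y => ∃ z, (x, z) ∈ E ∧ WalkLen E n z y

/-- Graph distance between `x` and `y` is at most `r`. -/
def DistLE (E : Set (V × V)) (r : ℕ) (x y : V) : Prop := ∃ n ≤ r, WalkLen E n x y

/-- `x` and `y` lie in the same connectivity component. -/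
def Reach (E : Set (V × V)) (x y : V) : Prop := ∃ n, WalkLen E n x y

/-- The connectivity component of `x`. -/
def component (E : Set (V × V)) (x : V) : Set V := {y | Reach E x y}

/-- A set `X` of vertices is `r`-sparse: distinct vertices of `X` are at distance `> r`. -/
def RSparse (E : Set (V × V)) (r : ℕ) (X : Set V) : Prop :=
  ∀ x ∈ X, ∀ y ∈ X, x ≠ y → ¬ DistLE E r x y

/-- A set `Q` of vertices is `r`-dense: every vertex is at distance at most `r` from `Q`. -/
def RDense (E : Set (V × V)) (r : ℕ) (Q : Set V) : Prop :=
  ∀ x : V, ∃ y ∈ Q, DistLE E r x y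

/-- The graph has no odd cycles, i.e. no closed walk of odd length. -/
def NoOddCycles (E : Set (V × V)) : Prop :=
  ∀ (n : ℕ) (x : V), ¬ WalkLen E (2 * n + 1) x x

/-- An invertible Borel bijection between Borel subsets of `V` preserving the measure `μ`. -/
structure PartialMPB [MeasurableSpace V] (μ : Measure V) where
  Dom : Set V
  Ran : Set V
  measDom : MeasurableSet Dom
  measRan : MeasurableSet Ran
  toFun : V → V
  invFun : V → V
  meas_toFun : Measurable toFun
  meas_invFun : Measurable invFun
  mapsTo : MapsTo toFun Dom Ran
  mapsTo_inv : MapsTo invFun Ran Dom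
  left_inv : ∀ x ∈ Dom, invFun (toFun x) = x
  right_inv : ∀ y ∈ Ran, toFun (invFun y) = y
  measure_preserving : ∀ S ⊆ Dom, MeasurableSet S → μ (toFun '' S) = μ S

/-- The maps `φ i` generate the edge set `E`:
`{x, y} ∈ E` iff `x ≠ y` and some `φ i` maps `x` to `y` or `y` to `x`. -/
def Generates [MeasurableSpace V] {μ : Measure V} {k : ℕ}
    (φ : Fin k → PartialMPB μ) (E : Set (V × V)) : Prop :=
  ∀ x y : V, (x, y) ∈ E ↔ x ≠ y ∧ ∃ i : Fin k,
    (x ∈ (φ i).Dom ∧ (φ i).toFun x = y) ∨ (y ∈ (φ i).Dom ∧ (φ i).toFun y = x)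

/-- A graphing (measure-preserving graph) on the measurable space `V`. -/
structure Graphing (V : Type u) [MeasurableSpace V] where
  μ : Measure V
  prob : IsProbabilityMeasure μ
  E : Set (V × V)
  measE : MeasurableSet E
  symm : IsSymm E
  irrefl : Irrefl E
  bddDeg : ∃ d : ℕ, MaxDegLE E d
  gen : ∃ (k : ℕ) (φ : Fin k → PartialMPB μ), Generates φ E

/-- The measurable chromatic index of `(E, μ)` is at most `c`: there is a Borel partition
`E = E₀ ∪ E₁ ∪ ⋯ ∪ E_c` where `E₁, …, E_c` are matchings and the set of vertices covered
by `E₀` is `μ`-null. -/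
def ChromIndexLE [MeasurableSpace V] (μ : Measure V) (E : Set (V × V)) (c : ℕ) : Prop :=
  ∃ F : Fin (c + 1) → Set (V × V),
    (∀ i, MeasurableSet (F i)) ∧
    (∀ i, IsSymm (F i)) ∧
    (⋃ i, F i) = E ∧
    (∀ i j, i ≠ j → Disjoint (F i) (F j)) ∧
    (∀ i, i ≠ 0 → IsMatching (F i)) ∧
    μ (coveredVerts (F 0)) = 0

/-! ### Finite graphs, edge colorings and the function `f` -/

/-- A proper edge coloring of the (symmetric) edge set `E`: it is symmetric on `E` and
adjacent edges receive distinct colors. -/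
def ProperEdgeColoring (E : Set (V × V)) (c : V × V → ℕ) : Prop :=
  (∀ x y : V, (x, y) ∈ E → c (x, y) = c (y, x)) ∧
  (∀ x y z : V, (x, y) ∈ E → (x, z) ∈ E → y ≠ z → c (x, y) ≠ c (x, z))

/-- A leaf: an edge one of whose endpoints has degree 1. -/
def IsLeafEdge (E : Set (V × V)) (q : V × V) : Prop :=
  q ∈ E ∧ ((nbrs E q.1).ncard = 1 ∨ (nbrs E q.2).ncard = 1)

/-- The extension property behind the definition of `f`: in every finite graph
with all degrees at most `d` except at most one vertex of degree `d + 1`, every proper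
pre-coloring of at most `d - 1` leaves (counted as `2 * (d - 1)` ordered pairs) extends to a
proper edge coloring of the whole graph using at most `d + fv` colors. -/
def PreColorExt (d fv : ℕ) : Prop :=
  ∀ (W : Type) (E : Set (W × W)), Finite W → IsSymm E → Irrefl E →
    MaxDegLE E (d + 1) →
    (∀ x y : W, d < (nbrs E x).ncard → d < (nbrs E y).ncard → x = y) →
    ∀ (L : Set (W × W)) (p : W × W → ℕ),
      L ⊆ E → IsSymm L → (∀ q ∈ L, IsLeafEdge E q) → L.ncard ≤ 2 * (d - 1) →
      ProperEdgeColoring L p →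
      ∃ c : W × W → ℕ, ProperEdgeColoring E c ∧ (∀ q ∈ L, c q = p q) ∧
        (c '' E).ncard ≤ d + fv

/-- `fDef k` is the least `f` such that `PreColorExt d f` holds for all `1 ≤ d ≤ k`. -/
noncomputable def fDef (k : ℕ) : ℕ :=
  sInf {fv : ℕ | ∀ d : ℕ, 1 ≤ d → d ≤ k → PreColorExt d fv}


/-- The edge set of the translation graphing `T_α` on the circle `ℝ/ℤ`:
`x` and `y` are adjacent iff `y = x + α` or `y = x - α` (mod 1). -/
def circleEdges (α : ℝ) : Set (UnitAddCircle × UnitAddCircle) :=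
  {p | p.2 = p.1 + (α : UnitAddCircle) ∨ p.2 = p.1 - (α : UnitAddCircle)}


/-! ### Auxiliary lemmas for Statement 18 -/

section Statement18Aux

open Function

private lemma irr_two {α : ℝ} (hα : Irrational α) : Irrational (α + α) := by
  have h2 : ((2 : ℚ) : ℝ) * α = α + α := by push_cast; ring
  exact h2 ▸ Irrational.ratCast_mul hα (by norm_num)

private lemma two_beta_ne_zero {α : ℝ} (hα : Irrational α) :
    ((α : UnitAddCircle) + (α : UnitAddCircle)) ≠ 0 := by
  intro h
  have h' : ((α + α : ℝ) : UnitAddCircle) = 0 := h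
  rw [AddCircle.coe_eq_zero_iff] at h'
  obtain ⟨n, hn⟩ := h'
  exact (irr_two hα).ne_int n (by simpa using hn.symm)

private lemma denseRange_zsmul_two {α : ℝ} (hα : Irrational α) :
    DenseRange (fun n : ℤ => n • ((α : UnitAddCircle) + (α : UnitAddCircle))) := by
  have hγ : Irrational (α + α) := irr_two hα
  have hS : Dense ((AddSubgroup.closure {α + α, (1 : ℝ)} : AddSubgroup ℝ) : Set ℝ) := by
    rcases AddSubgroup.dense_or_cyclic (AddSubgroup.closure {α + α, (1 : ℝ)}) with h | ⟨a, ha⟩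
    · exact h
    · exfalso
      have hγm : α + α ∈ AddSubgroup.closure {α + α, (1 : ℝ)} :=
        AddSubgroup.subset_closure (by simp)
      have h1m : (1 : ℝ) ∈ AddSubgroup.closure {α + α, (1 : ℝ)} :=
        AddSubgroup.subset_closure (by simp)
      rw [ha, AddSubgroup.mem_closure_singleton] at hγm h1m
      obtain ⟨m, hm⟩ := hγm
      obtain ⟨n, hn⟩ := h1m
      rw [zsmul_eq_mul] at hm hn
      have hn0 : (n : ℝ) ≠ 0 := by
        intro h0
        rw [h0, zero_mul] at hn
        exact zero_ne_one hn
      have key : (α + α) * n = m := by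
        calc (α + α) * n = m * a * n := by rw [hm]
          _ = m * (n * a) := by ring
          _ = m := by rw [hn, mul_one]
      refine hγ ⟨(m : ℚ) / (n : ℚ), ?_⟩
      have hnq : ((n : ℚ) : ℝ) ≠ 0 := by push_cast; exact hn0
      push_cast
      field_simp
      linarith [key]
  have hq : Surjective (QuotientAddGroup.mk : ℝ → UnitAddCircle) := by
    intro y
    exact Quotient.inductionOn' y fun x => ⟨x, rfl⟩
  have himg : Dense ((QuotientAddGroup.mk : ℝ → UnitAddCircle) ''
      ((AddSubgroup.closure {α + α, (1 : ℝ)} : AddSubgroup ℝ) : Set ℝ)) :=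
    DenseRange.dense_image hq.denseRange continuous_quotient_mk' hS
  refine himg.mono ?_
  rintro _ ⟨x, hx, rfl⟩
  rw [SetLike.mem_coe, AddSubgroup.mem_closure_pair] at hx
  obtain ⟨m, n, rfl⟩ := hx
  refine ⟨m, ?_⟩
  have h1 : ((1 : ℝ) : UnitAddCircle) = 0 := AddCircle.coe_period 1
  show m • ((α : UnitAddCircle) + (α : UnitAddCircle)) =
    ((m • (α + α) + n • (1 : ℝ) : ℝ) : UnitAddCircle)
  calc m • ((α : UnitAddCircle) + (α : UnitAddCircle))
      = m • (((α + α : ℝ)) : UnitAddCircle) + n • (((1 : ℝ)) : UnitAddCircle) := by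
        rw [h1, smul_zero, add_zero]
        rfl
    _ = _ := rfl

/-- The core measure-theoretic argument: there is no pair of (essentially) disjoint Borel
sets `A1, A2` covering the circle a.e. such that a.e. `A1 + β ⊆ A2` and `A2 + β ⊆ A1`,
when the rotation by `β + β` is "irrational" (has dense multiples). -/
private lemma core {β : UnitAddCircle}
    (hdense : DenseRange (fun n : ℤ => n • (β + β)))
    {A1 A2 : Set UnitAddCircle} (m1 : MeasurableSet A1) (m2 : MeasurableSet A2)
    (hdisj : volume (A1 ∩ A2) = 0)
    (hcov : volume ((A1 ∪ A2)ᶜ) = 0)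
    (h12 : volume (A1 \ (fun x => β + x) ⁻¹' A2) = 0)
    (h21 : volume (A2 \ (fun x => β + x) ⁻¹' A1) = 0) : False := by
  haveI : Fact ((0 : ℝ) < 1) := ⟨zero_lt_one⟩
  set T : UnitAddCircle → UnitAddCircle := fun x => β + x with hT
  have hTm : MeasurePreserving T volume volume := measurePreserving_add_left volume β
  have hT2m : MeasurePreserving (fun x => (β + β) + x) volume volume :=
    measurePreserving_add_left volume (β + β)
  have hpre : (fun x => (β + β) + x) ⁻¹' A1 = T ⁻¹' (T ⁻¹' A1) := by
    ext x
    simp [T, add_assoc]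
  have huniv : (volume : Measure UnitAddCircle) Set.univ = 1 := by
    simp [AddCircle.measure_univ 1]
  have hA2le : volume A2 ≤ volume A1 := by
    calc volume A2 ≤ volume ((A2 \ T ⁻¹' A1) ∪ T ⁻¹' A1) := by
          refine measure_mono fun x hx => ?_
          by_cases h : x ∈ T ⁻¹' A1
          · exact Or.inr h
          · exact Or.inl ⟨hx, h⟩
      _ ≤ volume (A2 \ T ⁻¹' A1) + volume (T ⁻¹' A1) := measure_union_le _ _
      _ = volume A1 := by
          rw [h21, hTm.measure_preimage m1.nullMeasurableSet, zero_add]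
  have hA1le : volume A1 ≤ volume A2 := by
    calc volume A1 ≤ volume ((A1 \ T ⁻¹' A2) ∪ T ⁻¹' A2) := by
          refine measure_mono fun x hx => ?_
          by_cases h : x ∈ T ⁻¹' A2
          · exact Or.inr h
          · exact Or.inl ⟨hx, h⟩
      _ ≤ volume (A1 \ T ⁻¹' A2) + volume (T ⁻¹' A2) := measure_union_le _ _
      _ = volume A2 := by
          rw [h12, hTm.measure_preimage m2.nullMeasurableSet, zero_add]
  have hinv : volume (A1 \ (fun x => (β + β) + x) ⁻¹' A1) = 0 := by
    rw [hpre]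
    have hsub : A1 \ T ⁻¹' (T ⁻¹' A1) ⊆ (A1 \ T ⁻¹' A2) ∪ T ⁻¹' (A2 \ T ⁻¹' A1) := by
      rintro x ⟨hx1, hx2⟩
      by_cases h2 : T x ∈ A2
      · exact Or.inr ⟨h2, fun h => hx2 h⟩
      · exact Or.inl ⟨hx1, h2⟩
    have hz2 : volume (T ⁻¹' (A2 \ T ⁻¹' A1)) = 0 := by
      rw [hTm.measure_preimage ((m2.diff (m1.preimage hTm.measurable)).nullMeasurableSet)]
      exact h21
    exact measure_mono_null hsub (measure_union_null h12 hz2)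
  set B : Set UnitAddCircle := (fun x => (β + β) + x) ⁻¹' A1 with hB
  have mB : MeasurableSet B := m1.preimage hT2m.measurable
  have hBvol : volume B = volume A1 := hT2m.measure_preimage m1.nullMeasurableSet
  have hA1B : volume A1 ≤ volume (B ∩ A1) := by
    calc volume A1 = volume ((A1 ∩ B) ∪ (A1 \ B)) := by rw [Set.inter_union_diff]
      _ ≤ volume (A1 ∩ B) + volume (A1 \ B) := measure_union_le _ _
      _ = volume (B ∩ A1) := by rw [hinv, add_zero, Set.inter_comm]
  have hBd : volume (B \ A1) = 0 := by
    have h := measure_diff_add_inter (μ := (volume : Measure UnitAddCircle)) B m1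
    have hle : volume (B \ A1) + volume (B ∩ A1) ≤ 0 + volume (B ∩ A1) := by
      rw [zero_add, h, hBvol]
      exact hA1B
    exact le_antisymm
      (ENNReal.le_of_add_le_add_right (measure_ne_top volume (B ∩ A1)) hle) zero_le
  have haeB : (fun x => (β + β) + x) ⁻¹' A1 =ᵐ[volume] A1 :=
    (MeasureTheory.ae_eq_set).mpr ⟨hBd, hinv⟩
  have herg : Ergodic (fun x => (β + β) + x) (volume : Measure UnitAddCircle) :=
    ergodic_add_left_of_denseRange_zsmul hdense volume
  rcases herg.quasiErgodic.ae_empty_or_univ₀ m1.nullMeasurableSet haeB with he | hu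
  · have hA1 : volume A1 = 0 := ae_eq_empty.mp he
    have hA2 : volume A2 = 0 := le_antisymm (hA2le.trans hA1.le) zero_le
    have hone : (1 : ℝ≥0∞) ≤ 0 := by
      calc (1 : ℝ≥0∞) = volume (Set.univ : Set UnitAddCircle) := huniv.symm
        _ ≤ volume (A1 ∪ A2) + volume ((A1 ∪ A2)ᶜ) := by
            refine (measure_mono fun x _ => ?_).trans (measure_union_le _ _)
            by_cases h : x ∈ A1 ∪ A2
            · exact Or.inl h
            · exact Or.inr h
        _ ≤ (volume A1 + volume A2) + 0 := by
            rw [hcov]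
            exact add_le_add_left (measure_union_le _ _) 0
        _ = 0 := by rw [hA1, hA2]; simp
    exact one_ne_zero (le_antisymm hone zero_le)
  · have hA1c : volume A1ᶜ = 0 := ae_eq_univ.mp hu
    have hA2 : volume A2 = 0 := by
      have hsub : A2 ⊆ (A1 ∩ A2) ∪ A1ᶜ := by
        intro x hx
        by_cases h : x ∈ A1
        · exact Or.inl ⟨h, hx⟩
        · exact Or.inr h
      refine le_antisymm ((measure_mono hsub).trans ((measure_union_le _ _).trans ?_)) zero_le
      rw [hdisj, hA1c]
      simp
    have hA1 : volume A1 = 0 := le_antisymm (hA1le.trans hA2.le) zero_le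
    have : (1 : ℝ≥0∞) = 0 := by
      rw [← huniv, ← measure_congr hu]
      exact hA1
    exact one_ne_zero this

end Statement18Aux

set_option maxHeartbeats 1000000 in
/-- For irrational `α`, every Borel matching of the translation graphing
`T_α` misses a set of vertices of positive Lebesgue measure; consequently the measurable
chromatic index of `T_α` is strictly greater than `2`. -/
theorem translation_graphing_no_ae_perfect_matching (α : ℝ) (hα : Irrational α) :
    (∀ M : Set (UnitAddCircle × UnitAddCircle),
      M ⊆ circleEdges α → MeasurableSet M → IsMatching M →
      0 < volume {x : UnitAddCircle | x ∉ coveredVerts M}) ∧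
    ¬ ChromIndexLE (volume : Measure UnitAddCircle) (circleEdges α) 2 := by
  set β : UnitAddCircle := (α : UnitAddCircle) with hβdef
  have htwo : β + β ≠ 0 := two_beta_ne_zero hα
  have hdense : DenseRange (fun n : ℤ => n • (β + β)) := denseRange_zsmul_two hα
  have hne : ∀ x : UnitAddCircle, x + β ≠ x - β := by
    intro x h
    apply htwo
    rw [sub_eq_add_neg] at h
    have hb : β = -β := add_left_cancel h
    exact eq_neg_iff_add_eq_zero.mp hb
  have hg1 : Measurable (fun x : UnitAddCircle => (x, x + β)) := by measurability
  have hg2 : Measurable (fun x : UnitAddCircle => (x, x - β)) := by measurability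
  constructor
  · intro M hME hMm hM
    by_contra hc
    have h0 : volume {x : UnitAddCircle | x ∉ coveredVerts M} = 0 := by
      simpa [not_lt, le_zero_iff] using hc
    set A1 : Set UnitAddCircle := (fun x => (x, x + β)) ⁻¹' M with hA1def
    set A2 : Set UnitAddCircle := (fun x => (x, x - β)) ⁻¹' M with hA2def
    have memA1 : ∀ x : UnitAddCircle, x ∈ A1 ↔ (x, x + β) ∈ M := fun x => Iff.rfl
    have memA2 : ∀ x : UnitAddCircle, x ∈ A2 ↔ (x, x - β) ∈ M := fun x => Iff.rfl
    have m1 : MeasurableSet A1 := hMm.preimage hg1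
    have m2 : MeasurableSet A2 := hMm.preimage hg2
    have hdisj : volume (A1 ∩ A2) = 0 := by
      have : A1 ∩ A2 = ∅ := by
        ext x
        simp only [Set.mem_inter_iff, Set.mem_empty_iff_false, iff_false, not_and]
        intro h1 h2
        exact hne x (hM.2 x (x + β) (x - β) ((memA1 x).mp h1) ((memA2 x).mp h2))
      rw [this]
      exact measure_empty
    have hiff : ∀ x : UnitAddCircle, (∃ y, (x, y) ∈ M) ↔ (x ∈ A1 ∨ x ∈ A2) := by
      intro x
      constructor
      · rintro ⟨y, hy⟩
        rcases hME hy with h | h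
        · left
          rw [memA1 x, ← h]
          exact hy
        · right
          rw [memA2 x, ← h]
          exact hy
      · rintro (h | h)
        · exact ⟨x + β, (memA1 x).mp h⟩
        · exact ⟨x - β, (memA2 x).mp h⟩
    have hcovEq : {x : UnitAddCircle | x ∉ coveredVerts M} = (A1 ∪ A2)ᶜ := by
      ext x
      simp only [Set.mem_setOf_eq, Set.mem_compl_iff, Set.mem_union]
      exact not_congr (hiff x)
    have hcov : volume ((A1 ∪ A2)ᶜ) = 0 := hcovEq ▸ h0
    have h12 : volume (A1 \ (fun x => β + x) ⁻¹' A2) = 0 := by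
      have hsub : A1 \ (fun x => β + x) ⁻¹' A2 ⊆ (∅ : Set UnitAddCircle) := by
        rintro x ⟨h1, h2⟩
        exfalso
        apply h2
        show (β + x, (β + x) - β) ∈ M
        rw [add_sub_cancel_left, add_comm β x]
        exact hM.1 _ _ ((memA1 x).mp h1)
      exact measure_mono_null hsub measure_empty
    have h21 : volume (A2 \ (fun x => β + x) ⁻¹' A1) = 0 := by
      have hsub : A2 \ (fun x => β + x) ⁻¹' A1 ⊆ (fun x => β + x) ⁻¹' ((A1 ∪ A2)ᶜ) := by
        rintro x ⟨h2, hn1⟩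
        intro hmem
        rcases hmem with hmem | hmem
        · exact hn1 hmem
        · have hxA2 : (β + x, (β + x) - β) ∈ M := (memA2 _).mp hmem
          rw [add_sub_cancel_left] at hxA2
          have hup : (x, β + x) ∈ M := hM.1 _ _ hxA2
          have hdn : (x, x - β) ∈ M := (memA2 x).mp h2
          have heq := hM.2 x (β + x) (x - β) hup hdn
          rw [add_comm] at heq
          exact hne x heq
      refine measure_mono_null hsub ?_
      rw [(measurePreserving_add_left volume β).measure_preimage
        ((m1.union m2).compl.nullMeasurableSet)]
      exact hcov
    exact (core hdense m1 m2 hdisj hcov h12 h21).elim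
  · rintro ⟨F, measF, symmF, hunion, hdisjF, hmatch, hnull⟩
    set A0 : Set UnitAddCircle := (fun x => (x, x + β)) ⁻¹' F 0 with hA0def
    set A1 : Set UnitAddCircle := (fun x => (x, x + β)) ⁻¹' F 1 with hA1def
    set A2 : Set UnitAddCircle := (fun x => (x, x + β)) ⁻¹' F 2 with hA2def
    have memA0 : ∀ x : UnitAddCircle, x ∈ A0 ↔ (x, x + β) ∈ F 0 := fun x => Iff.rfl
    have memA1 : ∀ x : UnitAddCircle, x ∈ A1 ↔ (x, x + β) ∈ F 1 := fun x => Iff.rfl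
    have memA2 : ∀ x : UnitAddCircle, x ∈ A2 ↔ (x, x + β) ∈ F 2 := fun x => Iff.rfl
    have mA0 : MeasurableSet A0 := (measF 0).preimage hg1
    have m1 : MeasurableSet A1 := (measF 1).preimage hg1
    have m2 : MeasurableSet A2 := (measF 2).preimage hg1
    have hA0 : volume A0 = 0 :=
      measure_mono_null (fun x hx => (⟨x + β, hx⟩ : ∃ y, (x, y) ∈ F 0)) hnull
    have hcover : ∀ x : UnitAddCircle, x ∈ A0 ∨ x ∈ A1 ∨ x ∈ A2 := by
      intro x
      have hxE : (x, x + β) ∈ circleEdges α := Or.inl rfl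
      rw [← hunion, Set.mem_iUnion] at hxE
      obtain ⟨i, hi⟩ := hxE
      fin_cases i
      · exact Or.inl hi
      · exact Or.inr (Or.inl hi)
      · exact Or.inr (Or.inr hi)
    have hdisj : volume (A1 ∩ A2) = 0 := by
      have : A1 ∩ A2 = ∅ := by
        ext x
        simp only [Set.mem_inter_iff, Set.mem_empty_iff_false, iff_false, not_and]
        intro h1 h2
        exact (Set.disjoint_left.mp (hdisjF 1 2 (by decide))) h1 h2
      rw [this]
      exact measure_empty
    have hcov : volume ((A1 ∪ A2)ᶜ) = 0 := by
      refine measure_mono_null (fun x hx => ?_) hA0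
      rcases hcover x with h | h | h
      · exact h
      · exact absurd (Or.inl h) hx
      · exact absurd (Or.inr h) hx
    have hmain : ∀ i : Fin 3, i ≠ 0 → ∀ x : UnitAddCircle,
        (x, x + β) ∈ F i → (β + x, (β + x) + β) ∈ F i → False := by
      intro i hi x hx hbx
      have hb : (x + β, x) ∈ F i := symmF i _ _ hx
      rw [add_comm β x] at hbx
      have heq := (hmatch i hi).2 (x + β) ((x + β) + β) x hbx hb
      apply htwo
      have hxx : x + (β + β) = x + 0 := by
        rw [add_zero, ← add_assoc]
        exact heq
      exact add_left_cancel hxx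
    have hTnull : volume ((fun x => β + x) ⁻¹' A0) = 0 := by
      rw [(measurePreserving_add_left volume β).measure_preimage mA0.nullMeasurableSet]
      exact hA0
    have h12 : volume (A1 \ (fun x => β + x) ⁻¹' A2) = 0 := by
      have hsub : A1 \ (fun x => β + x) ⁻¹' A2 ⊆ (fun x => β + x) ⁻¹' A0 := by
        rintro x ⟨h1, hn2⟩
        rcases hcover (β + x) with h | h | h
        · exact h
        · exact absurd (hmain 1 (by decide) x ((memA1 x).mp h1) ((memA1 _).mp h)) not_false
        · exact absurd h hn2
      exact measure_mono_null hsub hTnull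
    have h21 : volume (A2 \ (fun x => β + x) ⁻¹' A1) = 0 := by
      have hsub : A2 \ (fun x => β + x) ⁻¹' A1 ⊆ (fun x => β + x) ⁻¹' A0 := by
        rintro x ⟨h2, hn1⟩
        rcases hcover (β + x) with h | h | h
        · exact h
        · exact absurd h hn1
        · exact absurd (hmain 2 (by decide) x ((memA2 x).mp h2) ((memA2 _).mp h)) not_false
      exact measure_mono_null hsub hTnull
    exact core hdense m1 m2 hdisj hcov h12 h21

end CLP
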